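/- Let C be a positive integer, fix c ∈ {1,…,C}, let θ ∈ (0,1), and for each l ∈ {1,…,C} let A_l ∈ ℂ^{K_l×N}. Let D_c ∈ ℂ^{K_c×K_c} with ‖D_c‖_F² ≤ ‖A_c‖_F². Let β_c = 1 and β_l = √((1−θ)/θ) for l ≠ c, let H^eff ∈ ℂ^{K×N} (K = Σ_l K_l) be the vertical stack of the blocks β_l A_l, and let D̃ be the matrix whose block row c equals D_c and whose other block rows are zero. Let P^w > 0, P^max > 0, λ° > 0, suppose (H^eff)ᴴH^eff + λ°I_N is invertible, and suppose V° = √(P^w)((H^eff)ᴴH^eff + λ°I_N)⁻¹(H^eff)ᴴD̃ satisfies ‖V°‖_F² = P^max. Then λ° ≤ ‖H^eff‖_F² · √(N · P^w / P^max). (Paper's Proposition 2: the optimal Lagrange multiplier of the per-cell weighted problem lies in the interval (0, ‖H_c^eff‖_F² √(N_c P_c^w / P_c^max)].) -/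

import Mathlib

open Matrix BigOperators

/-- Squared Frobenius norm of a complex matrix. -/
noncomputable def frobSq {m n : Type*} [Fintype m] [Fintype n] (A : Matrix m n ℂ) : ℝ :=
  ∑ i, ∑ j, ‖A i j‖ ^ 2

noncomputable def nsq {ι : Type*} [Fintype ι] (x : ι → ℂ) : ℝ := ∑ i, ‖x i‖ ^ 2

lemma nsq_nonneg {ι : Type*} [Fintype ι] (x : ι → ℂ) : 0 ≤ nsq x :=
  Finset.sum_nonneg fun _ _ => sq_nonneg _

lemma cs {ι : Type*} [Fintype ι] (a b : ι → ℂ) :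
    ‖∑ i, a i * b i‖ ≤ Real.sqrt (nsq a) * Real.sqrt (nsq b) := by
  have h := @norm_inner_le_norm ℂ (EuclideanSpace ℂ ι) _ _ _
    ((WithLp.equiv 2 (ι → ℂ)).symm fun i => star (a i)) ((WithLp.equiv 2 (ι → ℂ)).symm b)
  simp only [EuclideanSpace.norm_eq, PiLp.inner_apply, RCLike.inner_apply] at h
  simp only [WithLp.equiv_symm_apply, PiLp.toLp_apply, RCLike.star_def, Complex.conj_conj] at h
  simpa [nsq, mul_comm] using h

lemma cs_sq {ι : Type*} [Fintype ι] (a b : ι → ℂ) :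
    ‖∑ i, a i * b i‖ ^ 2 ≤ nsq a * nsq b := by
  have h := cs a b
  calc ‖∑ i, a i * b i‖ ^ 2 ≤ (Real.sqrt (nsq a) * Real.sqrt (nsq b)) ^ 2 := by
        exact pow_le_pow_left₀ (norm_nonneg _) h 2
    _ = nsq a * nsq b := by
        rw [mul_pow, Real.sq_sqrt (nsq_nonneg a), Real.sq_sqrt (nsq_nonneg b)]

lemma key {K N : Type*} [Fintype K] [Fintype N] [DecidableEq N] (H : Matrix K N ℂ) (lam : ℝ) (hlam : 0 < lam)
    (x : N → ℂ) :
    lam ^ 2 * nsq x ≤ nsq ((Hᴴ * H + (lam : ℂ) • (1 : Matrix N N ℂ)) *ᵥ x) := by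
  set M := Hᴴ * H + (lam : ℂ) • (1 : Matrix N N ℂ) with hM
  set y := M *ᵥ x with hy
  have hdot : star x ⬝ᵥ y = (nsq (H *ᵥ x) : ℂ) + (lam : ℂ) * (nsq x : ℂ) := by
    rw [hy, hM, Matrix.add_mulVec, Matrix.smul_mulVec, Matrix.one_mulVec,
      dotProduct_add, dotProduct_smul, ← Matrix.mulVec_mulVec,
      Matrix.dotProduct_mulVec, ← Matrix.star_mulVec]
    congr 1
    · simp [dotProduct, nsq, Pi.star_apply, Complex.star_def, mul_comm,
        Complex.mul_conj', Complex.ofReal_sum]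
    · simp [dotProduct, nsq, smul_eq_mul, Finset.mul_sum, Pi.star_apply,
        Complex.star_def, mul_comm, Complex.mul_conj']
  have hre : lam * nsq x ≤ (star x ⬝ᵥ y).re := by
    rw [hdot]
    simp only [Complex.add_re, Complex.ofReal_re, Complex.mul_re, Complex.ofReal_im]
    nlinarith [nsq_nonneg (H *ᵥ x)]
  have hub : (star x ⬝ᵥ y).re ≤ Real.sqrt (nsq x) * Real.sqrt (nsq y) := by
    calc (star x ⬝ᵥ y).re ≤ ‖star x ⬝ᵥ y‖ := Complex.re_le_norm _
      _ ≤ Real.sqrt (nsq (star x)) * Real.sqrt (nsq y) := cs _ _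
      _ = Real.sqrt (nsq x) * Real.sqrt (nsq y) := by simp [nsq]
  have h1 : lam * nsq x ≤ Real.sqrt (nsq x) * Real.sqrt (nsq y) := hre.trans hub
  rcases eq_or_lt_of_le (nsq_nonneg x) with h0 | h0
  · rw [← h0]; simpa using nsq_nonneg y
  · have hsx : Real.sqrt (nsq x) > 0 := Real.sqrt_pos.mpr h0
    have h2 : lam * Real.sqrt (nsq x) ≤ Real.sqrt (nsq y) := by
      nlinarith [Real.sq_sqrt (nsq_nonneg x), Real.sqrt_nonneg (nsq y), h1, hsx]
    calc lam ^ 2 * nsq x = (lam * Real.sqrt (nsq x)) ^ 2 := by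
          rw [mul_pow, Real.sq_sqrt (nsq_nonneg x)]
      _ ≤ Real.sqrt (nsq y) ^ 2 := by
          exact pow_le_pow_left₀ (by positivity) h2 2
      _ = nsq y := Real.sq_sqrt (nsq_nonneg y)

lemma frobSq_nonneg {m n : Type*} [Fintype m] [Fintype n] (A : Matrix m n ℂ) : 0 ≤ frobSq A :=
  Finset.sum_nonneg fun _ _ => nsq_nonneg _

lemma frobSq_cols {m n : Type*} [Fintype m] [Fintype n] (A : Matrix m n ℂ) :
    frobSq A = ∑ j, nsq (fun i => A i j) := by
  rw [frobSq]; exact Finset.sum_comm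

lemma frobSq_smul {m n : Type*} [Fintype m] [Fintype n] (r : ℂ) (A : Matrix m n ℂ) :
    frobSq (r • A) = ‖r‖ ^ 2 * frobSq A := by
  simp [frobSq, norm_mul, mul_pow, Finset.mul_sum]

lemma frobSq_mul_le {m k n : Type*} [Fintype m] [Fintype k] [Fintype n]
    (P : Matrix m k ℂ) (Q : Matrix k n ℂ) :
    frobSq (P * Q) ≤ frobSq P * frobSq Q := by
  calc frobSq (P * Q) = ∑ i, ∑ j, ‖∑ l, P i l * Q l j‖ ^ 2 := by
        simp [frobSq, Matrix.mul_apply]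
    _ ≤ ∑ i, ∑ j, nsq (fun l => P i l) * nsq (fun l => Q l j) := by
        refine Finset.sum_le_sum fun i _ => Finset.sum_le_sum fun j _ => ?_
        exact cs_sq _ _
    _ = frobSq P * frobSq Q := by
        rw [frobSq_cols Q, frobSq, Finset.sum_mul]
        refine Finset.sum_congr rfl fun i _ => ?_
        rw [Finset.mul_sum]
        exact Finset.sum_congr rfl fun j _ => by rw [nsq]

lemma frobSq_conjTranspose {m n : Type*} [Fintype m] [Fintype n] (A : Matrix m n ℂ) :
    frobSq Aᴴ = frobSq A := by
  rw [frobSq, Finset.sum_comm]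
  simp [frobSq, Matrix.conjTranspose_apply]

/-- Paper's Proposition 2: the optimal Lagrange multiplier of the per-cell
weighted problem satisfies `λ° ≤ ‖H^eff‖_F² √(N P^w / P^max)`, where `H^eff`
is the effective channel (vertical stack of `β_l A_l`) and `D̃` is the
effective demand (block row `c` equals `D_c`, other block rows zero). -/
theorem stmt16 (C N : ℕ) (hC : 0 < C) (c : Fin C)
    (θ : ℝ) (hθ0 : 0 < θ) (hθ1 : θ < 1)
    (Kl : Fin C → ℕ) (A : ∀ l : Fin C, Matrix (Fin (Kl l)) (Fin N) ℂ)
    (Dc : Matrix (Fin (Kl c)) (Fin (Kl c)) ℂ)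
    (hDc : frobSq Dc ≤ frobSq (A c))
    (β : Fin C → ℝ) (hβc : β c = 1)
    (hβ : ∀ l : Fin C, l ≠ c → β l = Real.sqrt ((1 - θ) / θ))
    (Heff : Matrix ((l : Fin C) × Fin (Kl l)) (Fin N) ℂ)
    (hHeff : Heff = Matrix.of fun p j => (β p.1 : ℂ) * A p.1 p.2 j)
    (Dt : Matrix ((l : Fin C) × Fin (Kl l)) (Fin (Kl c)) ℂ)
    (hDt : Dt = Matrix.of fun p j =>
      if h : p.1 = c then Dc (Fin.cast (congrArg Kl h) p.2) j else 0)
    (Pw Pmax lam : ℝ) (hPw : 0 < Pw) (hPmax : 0 < Pmax) (hlam : 0 < lam)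
    (hinv : IsUnit (Heffᴴ * Heff + (lam : ℂ) • (1 : Matrix (Fin N) (Fin N) ℂ)))
    (hV : frobSq ((Real.sqrt Pw : ℂ) •
        ((Heffᴴ * Heff + (lam : ℂ) • (1 : Matrix (Fin N) (Fin N) ℂ))⁻¹ * Heffᴴ * Dt))
      = Pmax) :
    lam ≤ frobSq Heff * Real.sqrt ((N : ℝ) * Pw / Pmax) := by
  -- frobSq Dt = frobSq Dc
  have hDtval : frobSq Dt = frobSq Dc := by
    rw [hDt, frobSq, ← Finset.univ_sigma_univ, Finset.sum_sigma]
    rw [Finset.sum_eq_single c]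
    · refine Finset.sum_congr rfl fun i _ => Finset.sum_congr rfl fun j _ => ?_
      have : (Fin.cast (congrArg Kl (rfl : c = c)) i) = i := by
        apply Fin.ext; simp
      simp [Matrix.of_apply, this]
    · intro l _ hl
      refine Finset.sum_eq_zero fun i _ => Finset.sum_eq_zero fun j _ => ?_
      simp [Matrix.of_apply, hl]
    · intro h; exact absurd (Finset.mem_univ c) h
  -- frobSq (A c) ≤ frobSq Heff
  have hAcF : frobSq (A c) ≤ frobSq Heff := by
    calc frobSq (A c) = ∑ i, ∑ j, ‖((β c : ℂ)) * A c i j‖ ^ 2 := by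
          simp [frobSq, hβc]
      _ ≤ ∑ l : Fin C, ∑ i : Fin (Kl l), ∑ j : Fin N, ‖((β l : ℂ)) * A l i j‖ ^ 2 := by
          refine Finset.single_le_sum (f := fun l => ∑ i : Fin (Kl l), ∑ j : Fin N, ‖((β l : ℂ)) * A l i j‖ ^ 2) (fun l _ => ?_) (Finset.mem_univ c)
          exact Finset.sum_nonneg fun _ _ => Finset.sum_nonneg fun _ _ => sq_nonneg _
      _ = frobSq Heff := by
          rw [hHeff, frobSq, ← Finset.univ_sigma_univ, Finset.sum_sigma]; rfl
  set M := Heffᴴ * Heff + (lam : ℂ) • (1 : Matrix (Fin N) (Fin N) ℂ) with hM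
  set X := M⁻¹ * Heffᴴ * Dt with hX
  have hF0 : 0 ≤ frobSq Heff := frobSq_nonneg _
  -- Pmax = Pw * frobSq X
  have hXval : Pw * frobSq X = Pmax := by
    rw [← hV, frobSq_smul]
    congr 1
    rw [Complex.norm_real, Real.norm_eq_abs, abs_of_nonneg (Real.sqrt_nonneg _),
      Real.sq_sqrt hPw.le]
  have hfX : 0 < frobSq X := by
    rcases (frobSq_nonneg X).eq_or_lt with h | h
    · exfalso; rw [← hXval, ← h, mul_zero] at hPmax; exact lt_irrefl 0 hPmax
    · exact h
  -- M * X = Heffᴴ * Dt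
  have hdet := (Matrix.isUnit_iff_isUnit_det M).mp hinv
  have hMX : M * X = Heffᴴ * Dt := by
    rw [hX, ← Matrix.mul_assoc, ← Matrix.mul_assoc, Matrix.mul_nonsing_inv _ hdet,
      Matrix.one_mul]
  -- key bound
  have hkey : lam ^ 2 * frobSq X ≤ frobSq (Heffᴴ * Dt) := by
    rw [frobSq_cols X, Finset.mul_sum, ← hMX, frobSq_cols (M * X)]
    refine Finset.sum_le_sum fun j _ => ?_
    have hcol : (fun i => (M * X) i j) = M *ᵥ (fun i => X i j) := by
      funext i; simp [Matrix.mul_apply, Matrix.mulVec, dotProduct]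
    rw [hcol, hM]
    exact key Heff lam hlam _
  -- submultiplicativity
  have hsub : frobSq (Heffᴴ * Dt) ≤ frobSq Heff * frobSq Heff := by
    calc frobSq (Heffᴴ * Dt) ≤ frobSq Heffᴴ * frobSq Dt := frobSq_mul_le _ _
      _ = frobSq Heff * frobSq Dc := by rw [frobSq_conjTranspose, hDtval]
      _ ≤ frobSq Heff * frobSq Heff := by
          exact mul_le_mul_of_nonneg_left (hDc.trans hAcF) hF0
  -- N ≥ 1
  have hN1 : (1 : ℝ) ≤ (N : ℝ) := by
    have : N ≠ 0 := by
      rintro rfl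
      have : frobSq X = 0 := by simp [frobSq]
      exact absurd this hfX.ne'
    exact_mod_cast Nat.one_le_iff_ne_zero.mpr this
  -- final arithmetic
  have hsq : lam ^ 2 ≤ frobSq Heff ^ 2 * ((N : ℝ) * Pw / Pmax) := by
    have heq : frobSq Heff ^ 2 * ((N : ℝ) * Pw / Pmax)
        = frobSq Heff ^ 2 * ((N : ℝ) * Pw) / Pmax := by ring
    rw [heq, le_div_iff₀ hPmax]
    have h3 : lam ^ 2 * Pmax = lam ^ 2 * (Pw * frobSq X) := by rw [hXval]
    nlinarith [mul_le_mul_of_nonneg_right (hkey.trans hsub) hPw.le, h3,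
      mul_nonneg (mul_nonneg (sq_nonneg (frobSq Heff)) hPw.le) (sub_nonneg.mpr hN1)]
  calc lam = Real.sqrt (lam ^ 2) := (Real.sqrt_sq hlam.le).symm
    _ ≤ Real.sqrt (frobSq Heff ^ 2 * ((N : ℝ) * Pw / Pmax)) := Real.sqrt_le_sqrt hsq
    _ = frobSq Heff * Real.sqrt ((N : ℝ) * Pw / Pmax) := by
        rw [Real.sqrt_mul (sq_nonneg _), Real.sqrt_sq hF0]
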